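/- For every real x with 0 < x < 1, the series ∑_{n=0}^∞ 1/((2n+1)² − x²)² converges and equals π²·sec²(πx/2)/(16·x²) − π·tan(πx/2)/(8·x³). -/

import Mathlib

open Real
open MeasureTheory intervalIntegral Complex


lemma int_ne {y : ℝ} (hy0 : 0 < y) (hy1 : y < 1) (m : ℤ) : (m:ℝ) ≠ y := by
  intro hm
  rcases le_or_gt m 0 with h | h
  · have : (m:ℝ) ≤ 0 := by exact_mod_cast h
    linarith
  · have : (1:ℝ) ≤ (m:ℝ) := by exact_mod_cast h
    linarith

lemma expE (u : ℝ) : Complex.exp (Complex.I * (u:ℂ) * (π:ℝ)) - Complex.exp (Complex.I * (u:ℂ) * ((-π:ℝ):ℂ))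
    = 2 * Complex.I * (Real.sin (u * π) : ℝ) := by
  rw [show Complex.I * (u:ℂ) * ((π:ℝ):ℂ) = (((u * π : ℝ)):ℂ) * Complex.I by push_cast; ring,
      show Complex.I * (u:ℂ) * ((-π:ℝ):ℂ) = ((-(u * π) : ℝ):ℂ) * Complex.I by push_cast; ring,
      Complex.exp_mul_I, Complex.exp_mul_I]
  push_cast
  simp [Complex.cos_neg, Complex.sin_neg]
  ring

lemma myInt {y : ℝ} (hy0 : 0 < y) (hy1 : y < 1) (n : ℤ) :
    ∫ t in (-π)..π, Complex.exp (-(n * Complex.I * t)) * Complex.cos (y * t)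
      = (((-1:ℝ)^n * Real.sin (π*y) * (2*y/(y^2-(n:ℝ)^2))) : ℝ) := by
  have h1 : y - (n:ℝ) ≠ 0 := fun h => int_ne hy0 hy1 n (by linarith)
  have h2 : y + (n:ℝ) ≠ 0 := fun h => int_ne hy0 hy1 (-n) (by push_cast; linarith)
  have d1 : ((y:ℂ) - n) ≠ 0 := by
    intro h; apply h1
    have : ((y - n : ℝ) : ℂ) = 0 := by push_cast; linear_combination h
    exact_mod_cast this
  have d2 : (-(y:ℂ) - n) ≠ 0 := by
    intro h; apply h2
    have : ((-(y + n) : ℝ) : ℂ) = 0 := by push_cast; linear_combination h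
    have := neg_eq_zero.mp (by exact_mod_cast this)
    linarith
  have c1 : (Complex.I * ((y:ℂ) - n)) ≠ 0 := mul_ne_zero Complex.I_ne_zero d1
  have c2 : (Complex.I * (-(y:ℂ) - n)) ≠ 0 := mul_ne_zero Complex.I_ne_zero d2
  have key : ∀ t : ℝ, Complex.exp (-(n * Complex.I * t)) * Complex.cos (y * t)
      = (Complex.exp ((Complex.I * ((y:ℂ) - n)) * t) + Complex.exp ((Complex.I * (-(y:ℂ) - n)) * t)) / 2 := by
    intro t
    rw [Complex.cos, mul_div_assoc', mul_add, ← Complex.exp_add, ← Complex.exp_add]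
    ring_nf
  rw [intervalIntegral.integral_congr (fun t _ => key t)]
  have i1 : IntervalIntegrable (fun x : ℝ => Complex.exp ((Complex.I * ((y:ℂ) - n)) * x)) volume (-π) π := by
    apply Continuous.intervalIntegrable; continuity
  have i2 : IntervalIntegrable (fun x : ℝ => Complex.exp ((Complex.I * (-(y:ℂ) - n)) * x)) volume (-π) π := by
    apply Continuous.intervalIntegrable; continuity
  rw [intervalIntegral.integral_div, intervalIntegral.integral_add i1 i2,
    integral_exp_mul_complex c1, integral_exp_mul_complex c2]
  have E1 := expE (y - n)
  have E2 := expE (-y - n)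
  push_cast at E1 E2
  have s1 : Real.sin ((y - n) * π) = (-1:ℝ)^n * Real.sin (π * y) := by
    rw [sub_mul, Real.sin_sub_int_mul_pi, mul_comm y π]
  have s2 : Real.sin ((-y - n) * π) = -((-1:ℝ)^n * Real.sin (π * y)) := by
    rw [sub_mul, Real.sin_sub_int_mul_pi, mul_comm]
    rw [show (-y) * π = -(π * y) by ring, Real.sin_neg]
    ring
  have S1 := congrArg (Complex.ofReal) s1
  have S2 := congrArg (Complex.ofReal) s2
  push_cast at S1 S2
  have d2' : ((y:ℂ) + n) ≠ 0 := by
    intro h; apply d2; linear_combination -h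
  have d3 : ((y:ℂ)^2 - (n:ℂ)^2) ≠ 0 := by
    intro h
    exact mul_ne_zero d1 d2' (by linear_combination h)
  push_cast
  rw [E1, E2, S1, S2]
  field_simp
  ring


lemma myCoeff {y : ℝ} (hy0 : 0 < y) (hy1 : y < 1) (n : ℤ) :
    haveI : Fact (0 < 2*π) := ⟨by positivity⟩
    fourierCoeff (AddCircle.liftIco (2*π) (-π) (fun t => Complex.cos (y * t))) n
      = (((-1:ℝ)^n * Real.sin (π*y) * (y/(π*(y^2-(n:ℝ)^2)))) : ℝ) := by
  haveI : Fact (0 < 2*π) := ⟨by positivity⟩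
  rw [fourierCoeff_liftIco_eq, fourierCoeffOn_eq_integral]
  simp only [fourier_coe_apply]
  have hπ : (π:ℝ) ≠ 0 := Real.pi_ne_zero
  have hexp : ∀ x : ℝ, Complex.exp (2 * π * Complex.I * (-n) * x / ((-π + 2*π) - (-π)))
      = Complex.exp (-(n * Complex.I * x)) := by
    intro x
    congr 1
    have h2 : ((π : ℝ) : ℂ) ≠ 0 := by exact_mod_cast Real.pi_ne_zero
    field_simp
    ring
  simp only [smul_eq_mul]
  rw [intervalIntegral.integral_congr
    (g := fun x : ℝ => Complex.exp (-((n:ℂ) * Complex.I * (x:ℂ))) * Complex.cos ((y:ℂ)*(x:ℂ)))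
    (fun x _ => by push_cast; rw [hexp x])]
  have hend : (-π + 2*π : ℝ) = π := by ring
  rw [hend, myInt hy0 hy1 n, Complex.real_smul, ← Complex.ofReal_mul]
  have d3 : y^2 - (n:ℝ)^2 ≠ 0 := by
    intro h
    have e1 : y - (n:ℝ) ≠ 0 := fun h' => int_ne hy0 hy1 n (by linarith)
    have e2 : y + (n:ℝ) ≠ 0 := fun h' => int_ne hy0 hy1 (-n) (by push_cast; linarith)
    exact mul_ne_zero e1 e2 (by linear_combination h)
  congr 1
  field_simp
  ring


lemma mySummable {y : ℝ} (hy0 : 0 < y) (hy1 : y < 1) :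
    Summable (fun n : ℤ => 1/((y^2 - (n:ℝ)^2)^2)) := by
  have h1 : (0:ℝ) < 1 - y^2 := by nlinarith
  set C : ℝ := 16/(1-y^2)^2 + 1/y^4 with hC
  have hC1 : 16/(1-y^2)^2 ≤ C := by
    have : (0:ℝ) < 1/y^4 := by positivity
    simp [hC]; positivity
  have hC2 : 1/y^4 ≤ C := by
    have : (0:ℝ) ≤ 16/(1-y^2)^2 := by positivity
    simp [hC]; positivity
  have base : Summable (fun n : ℕ => C * (1/((n:ℝ)+1)^4)) := by
    apply Summable.mul_left
    have : Summable (fun n : ℕ => 1/((n:ℝ)^4)) := by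
      simpa using Real.summable_one_div_nat_pow.mpr (by norm_num : 1 < 4)
    have h := (summable_nat_add_iff 1).mpr this
    apply h.congr
    intro n
    push_cast
    ring
  have bound : ∀ n : ℕ, 1/((y^2 - (n:ℝ)^2)^2) ≤ C * (1/((n:ℝ)+1)^4) := by
    intro n
    rcases Nat.eq_zero_or_pos n with h | h
    · subst h
      rw [show ((y^2 - ((0:ℕ):ℝ)^2)^2) = y^4 by push_cast; ring]
      simpa using hC2
    · have hn1 : (1:ℝ) ≤ (n:ℝ) := by exact_mod_cast h
      have hB : (0:ℝ) ≤ (1-y^2)*((n:ℝ)+1)^2/4 := by positivity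
      have e2 : ((n:ℝ)+1)^2 ≤ 4*(n:ℝ)^2 := by nlinarith
      have e3 : y^2 ≤ y^2*(n:ℝ)^2 := by nlinarith
      have hAB : (1-y^2)*((n:ℝ)+1)^2/4 ≤ (n:ℝ)^2 - y^2 := by nlinarith [mul_le_mul_of_nonneg_left e2 h1.le]
      have hpos : (0:ℝ) < (y^2 - (n:ℝ)^2)^2 := by
        apply pow_two_pos_of_ne_zero
        nlinarith
      calc 1/((y^2 - (n:ℝ)^2)^2) ≤ 1/(((1-y^2)*((n:ℝ)+1)^2/4)^2) := by
            apply one_div_le_one_div_of_le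
            · positivity
            · calc ((1-y^2)*((n:ℝ)+1)^2/4)^2 ≤ ((n:ℝ)^2 - y^2)^2 := by
                    exact pow_le_pow_left₀ hB hAB 2
                _ = (y^2 - (n:ℝ)^2)^2 := by ring
        _ = 16/(1-y^2)^2 * (1/((n:ℝ)+1)^4) := by field_simp; ring
        _ ≤ C * (1/((n:ℝ)+1)^4) := by
            apply mul_le_mul_of_nonneg_right hC1 (by positivity)
  have hnat : Summable (fun n : ℕ => 1/((y^2 - (n:ℝ)^2)^2)) :=
    Summable.of_nonneg_of_le (fun n => by positivity) bound base
  apply Summable.of_nat_of_neg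
  · exact hnat.congr fun n => by norm_num
  · apply hnat.congr
    intro n
    push_cast
    ring_nf


lemma d3 {y : ℝ} (hy0 : 0 < y) (hy1 : y < 1) (n : ℤ) : y^2 - (n:ℝ)^2 ≠ 0 := by
  intro h
  have e1 : y - (n:ℝ) ≠ 0 := fun h' => int_ne hy0 hy1 n (by linarith)
  have e2 : y + (n:ℝ) ≠ 0 := fun h' => int_ne hy0 hy1 (-n) (by push_cast; linarith)
  exact mul_ne_zero e1 e2 (by linear_combination h)

noncomputable def Sval (y : ℝ) : ℝ :=
  π^2/(2*y^2*Real.sin (π*y)^2) + π * Real.cos (π*y) / (2*y^3*Real.sin (π*y))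

lemma hasSum_int_aux {y : ℝ} (hy0 : 0 < y) (hy1 : y < 1) :
    HasSum (fun n : ℤ => 1/((y^2 - (n:ℝ)^2)^2)) (Sval y) := by
  unfold Sval
  haveI : Fact (0 < 2*π) := ⟨by positivity⟩
  have hsin : Real.sin (π*y) ≠ 0 := by
    apply ne_of_gt
    apply Real.sin_pos_of_pos_of_lt_pi
    · positivity
    · nlinarith [Real.pi_pos]
  have hπ : π ≠ 0 := Real.pi_ne_zero
  have hy : y ≠ 0 := hy0.ne'
  -- the continuous function on the circle
  set f : ℝ → ℂ := fun t => Complex.cos (y * t) with hf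
  have hcont : Continuous (AddCircle.liftIco (2*π) (-π) f) := by
    apply AddCircle.liftIco_continuous
    · show f (-π) = f (-π + 2*π)
      simp only [hf]
      rw [show (-π + 2*π : ℝ) = π by ring,
        show ((y:ℂ)*((-π:ℝ):ℂ)) = -((y:ℂ)*((π:ℝ):ℂ)) by push_cast; ring, Complex.cos_neg]
    · exact (Complex.continuous_cos.comp (by continuity)).continuousOn
  set K : C(AddCircle (2*π), ℂ) := ⟨_, hcont⟩ with hK
  have hcoeff : ∀ n : ℤ, fourierCoeff (⇑K) n
      = (((-1:ℝ)^n * Real.sin (π*y) * (y/(π*(y^2-(n:ℝ)^2)))) : ℝ) := fun n => myCoeff hy0 hy1 n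
  -- Parseval
  have P := tsum_sq_fourierCoeff (ContinuousMap.toLp 2 AddCircle.haarAddCircle ℂ K)
  simp_rw [fourierCoeff_toLp] at P
  have hae : (↑(ContinuousMap.toLp 2 AddCircle.haarAddCircle ℂ K) : AddCircle (2*π) → ℂ)
      =ᵐ[AddCircle.haarAddCircle] ⇑K := ContinuousMap.coeFn_toAEEqFun _ K
  rw [integral_congr_ae (hae.mono fun t ht => by rw [ht])] at P
  -- compute the L² norm integral
  have hInt : ∫ t : AddCircle (2*π), ‖K t‖^2 ∂AddCircle.haarAddCircle
      = (1/(2*π)) * ∫ x in (-π)..(-π+2*π), ‖K (x : AddCircle (2*π))‖^2 := by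
    rw [AddCircle.intervalIntegral_preimage (2*π) (-π) (fun z => ‖K z‖^2),
      AddCircle.volume_eq_smul_haarAddCircle, MeasureTheory.integral_smul_measure,
      ENNReal.toReal_ofReal (by positivity : (0:ℝ) ≤ 2*π), smul_eq_mul]
    field_simp
  have hae2 : ∀ᵐ x : ℝ, x ≠ (-π+2*π) := by
    rw [MeasureTheory.ae_iff]
    simp only [ne_eq, not_not, Set.setOf_eq_eq_singleton]
    exact Real.volume_singleton
  have hIcc : ∫ x in (-π)..(-π+2*π), ‖K (x : AddCircle (2*π))‖^2
      = ∫ x in (-π)..(-π+2*π), Real.cos (y*x)^2 := by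
    apply intervalIntegral.integral_congr_ae
    filter_upwards [hae2] with x hx hmem
    rw [Set.uIoc_of_le (by nlinarith [Real.pi_pos]) ] at hmem
    have hxIco : x ∈ Set.Ico (-π) (-π + 2*π) := ⟨hmem.1.le, lt_of_le_of_ne hmem.2 hx⟩
    show ‖(AddCircle.liftIco (2*π) (-π) f) ↑x‖^2 = _
    rw [AddCircle.liftIco_coe_apply hxIco]
    simp only [hf]
    rw [show ((y:ℂ)*(x:ℂ)) = ((y*x:ℝ):ℂ) by push_cast; ring, ← Complex.ofReal_cos,
      Complex.norm_real, Real.norm_eq_abs, _root_.sq_abs]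
  have hcos2 : ∫ x in (-π)..(-π+2*π), Real.cos (y*x)^2
      = π + Real.cos (π*y) * Real.sin (π*y) / y := by
    have h := intervalIntegral.smul_integral_comp_mul_left
      (a := -π) (b := -π+2*π) (fun u => Real.cos u ^ 2) y
    rw [integral_cos_sq, smul_eq_mul] at h
    rw [show y*(-π+2*π) = π*y by ring, show y*(-π) = -(π*y) by ring,
      Real.cos_neg, Real.sin_neg] at h
    refine mul_left_cancel₀ hy ?_
    rw [mul_add, mul_div_assoc', mul_div_cancel_left₀ _ hy]
    linarith [h]
  -- rewrite coefficients
  have hnorm : ∀ n : ℤ, ‖fourierCoeff (⇑K) n‖^2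
      = (Real.sin (π*y)*y/π)^2 * (1/((y^2-(n:ℝ)^2)^2)) := by
    intro n
    have h1 : ((-1:ℝ)^n)^2 = 1 := by
      rw [← zpow_natCast ((-1:ℝ)^n) 2, ← zpow_mul]
      exact Even.neg_one_zpow ⟨n, by ring⟩
    have hd := d3 hy0 hy1 n
    rw [hcoeff n, Complex.norm_real, Real.norm_eq_abs, _root_.sq_abs, mul_pow, mul_pow, h1, one_mul]
    field_simp
  simp_rw [hnorm] at P
  rw [tsum_mul_left, hInt, hIcc, hcos2] at P
  -- finish
  have hCst : (Real.sin (π*y)*y/π)^2 ≠ 0 := by positivity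
  rw [(mySummable hy0 hy1).hasSum_iff]
  refine mul_left_cancel₀ hCst ?_
  rw [P]
  field_simp



lemma natSum {y : ℝ} (hy0 : 0 < y) (hy1 : y < 1) :
    HasSum (fun n : ℕ => 1/((y^2 - (n:ℝ)^2)^2)) ((Sval y + 1/y^4)/2) := by
  have h := (hasSum_int_aux hy0 hy1).nat_add_neg
  have heq : (fun n : ℕ => 1/((y^2 - ((n:ℤ):ℝ)^2)^2) + 1/((y^2 - (((-n:ℤ)):ℝ)^2)^2))
      = fun n : ℕ => 2 * (1/((y^2 - (n:ℝ)^2)^2)) := by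
    funext n; push_cast; ring
  rw [heq] at h
  have h0 : 1/((y^2 - ((0:ℤ):ℝ)^2)^2) = 1/y^4 := by norm_num; ring_nf
  rw [h0] at h
  have := h.div_const 2
  exact this.congr_fun (fun n => by ring)

/-- For every real `x` with `0 < x < 1`, the series
`∑_{n=0}^∞ 1/((2n+1)² − x²)²` converges and equals
`π²·sec²(πx/2)/(16·x²) − π·tan(πx/2)/(8·x³)`, where `sec θ = 1/cos θ`. -/
theorem stmt_6 (x : ℝ) (hx0 : 0 < x) (hx1 : x < 1) :
    HasSum (fun n : ℕ => 1 / ((2 * (n : ℝ) + 1) ^ 2 - x ^ 2) ^ 2)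
      (π ^ 2 * (1 / Real.cos (π * x / 2)) ^ 2 / (16 * x ^ 2)
        - π * Real.tan (π * x / 2) / (8 * x ^ 3)) := by
  have hx2 : 0 < x/2 := by linarith
  have hx2' : x/2 < 1 := by linarith
  have hN := natSum hx0 hx1
  have hNh := natSum hx2 hx2'
  set g : ℕ → ℝ := fun n => 1/((x^2 - (n:ℝ)^2)^2) with hg
  -- even part
  have hEven : HasSum (fun k : ℕ => g (2*k)) (((Sval (x/2) + 1/(x/2)^4)/2)/16) :=
    (hNh.div_const 16).congr_fun fun k => by
      simp only [hg]
      push_cast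
      rw [div_div, show ((x:ℝ)^2-(2*(k:ℝ))^2)^2 = ((x/2)^2-(k:ℝ)^2)^2*16 by ring]
  -- odd part
  have hOddSummable : Summable (fun k : ℕ => g (2*k+1)) :=
    hN.summable.comp_injective (fun a b hab => by omega)
  have hOdd := hOddSummable.hasSum
  have huniq := (hEven.even_add_odd hOdd).unique hN
  -- hence hOdd's value equals ...
  have hval : ∑' k : ℕ, g (2*k+1)
      = (Sval x + 1/x^4)/2 - ((Sval (x/2) + 1/(x/2)^4)/2)/16 := by linarith [huniq]
  rw [hval] at hOdd
  have hfun : ∀ n : ℕ, 1/((2*(n:ℝ)+1)^2 - x^2)^2 = g (2*n+1) := by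
    intro n
    simp only [hg]
    push_cast
    rw [show ((x:ℝ)^2 - (2*(n:ℝ)+1)^2)^2 = ((2*(n:ℝ)+1)^2 - x^2)^2 by ring]
  have hfinal := hOdd.congr_fun hfun
  have hvaleq : (Sval x + 1/x^4)/2 - ((Sval (x/2) + 1/(x/2)^4)/2)/16
      = π ^ 2 * (1 / Real.cos (π * x / 2)) ^ 2 / (16 * x ^ 2)
        - π * Real.tan (π * x / 2) / (8 * x ^ 3) := by
    have hxpos : (0:ℝ) < π*x/2 := by positivity
    have hxlt : π*x/2 < π/2 := by nlinarith [Real.pi_pos]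
    have hc : Real.cos (π*x/2) ≠ 0 := by
      apply ne_of_gt
      apply Real.cos_pos_of_mem_Ioo
      constructor <;> nlinarith [Real.pi_pos]
    have hs : Real.sin (π*x/2) ≠ 0 := by
      apply ne_of_gt
      apply Real.sin_pos_of_pos_of_lt_pi
      · positivity
      · nlinarith [Real.pi_pos]
    have hsx : Real.sin (π*x) ≠ 0 := by
      apply ne_of_gt
      apply Real.sin_pos_of_pos_of_lt_pi
      · positivity
      · nlinarith [Real.pi_pos]
    have hxne : x ≠ 0 := hx0.ne'
    have hπ : π ≠ 0 := Real.pi_ne_zero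
    have h2 : π * (x/2) = π*x/2 := by ring
    have hsin2 : Real.sin (π*x) = 2 * Real.sin (π*x/2) * Real.cos (π*x/2) := by
      rw [show π*x = 2*(π*x/2) by ring, Real.sin_two_mul]; ring_nf
    have hcos2 : Real.cos (π*x) = 2 * Real.cos (π*x/2)^2 - 1 := by
      rw [show π*x = 2*(π*x/2) by ring, Real.cos_two_mul]; ring_nf
    have hpyth := Real.sin_sq_add_cos_sq (π*x/2)
    simp only [Sval, h2, hsin2, hcos2, Real.tan_eq_sin_div_cos]
    field_simp
    linear_combination (256*π*x*Real.sin (π*x/2)*Real.cos (π*x/2)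
      - 128*π^2*x^2) * hpyth
  rw [hvaleq] at hfinal
  exact hfinal
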